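/- Let V be a type and let d : V → V → ℝ satisfy the directed triangle inequality d(a,c) ≤ d(a,b) + d(b,c) for all a,b,c ∈ V. If vertices u, v, r ∈ V satisfy 2·d(v,r) + d(r,u) ≤ 2·d(v,u) + d(u,r), then d(u,r) + d(r,u) ≤ 2·(d(u,v) + d(v,u)). -/
import Mathlib


/-- Key observation (Chechik–Lifshitz): if `2·d(v,r) + d(r,u) ≤ 2·d(v,u) + d(u,r)`,
then the roundtrip distance `d(u⇌r)` is at most `2·d(u⇌v)`. -/
theorem key_observation {V : Type*} (d : V → V → ℝ)
    (htri : ∀ a b c : V, d a c ≤ d a b + d b c)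
    (u v r : V)
    (h : 2 * d v r + d r u ≤ 2 * d v u + d u r) :
    d u r + d r u ≤ 2 * (d u v + d v u) := by
  linarith [htri u v r]
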